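/- arXiv:math/0610816 — 2 statements merged into one kernel-verified Lean document; each statement's English description precedes it below -/
import Mathlib

section
/- Let G₁ and G₂ be groups, G = G₁ * G₂ their free product with canonical injections ι₁, ι₂, let M be a unital complex algebra, α an action of G on M by algebra automorphisms, and E_M the canonical conditional expectation on 𝕄 = M ⋊_α G. For k = 1, 2 let A_k ⊆ 𝕄 be the subalgebra of elements supported on ι_k(G_k). Then A₁ and A₂ are free with amalgamation over M with respect to E_M: for every n ≥ 1, every sequence of indices i₁, …, iₙ ∈ {1,2} with i_j ≠ i_{j+1} for 1 ≤ j < n, and every x_j ∈ A_{i_j} with E_M(x_j) = 0 for all j, one has E_M(x₁x₂⋯xₙ) = 0. -/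
open Finsupp

noncomputable section

variable {M : Type*} [Ring M] [Algebra ℂ M] {G : Type*} [Group G]

/-- The algebraic crossed product `M ⋊_α G`: finitely supported functions `G →₀ M`,
with multiplication determined by `(m u_g)(m' u_h) = (m · α_g(m')) u_{gh}`. -/
def CrossedProduct {M : Type*} [Ring M] [Algebra ℂ M] {G : Type*} [Group G]
    (_α : G →* (M ≃ₐ[ℂ] M)) : Type _ := G →₀ M

namespace CrossedProduct

variable (α : G →* (M ≃ₐ[ℂ] M))

/-- Reinterpret an element of the crossed product as a finitely supported function. -/
def toF (x : CrossedProduct α) : G →₀ M := x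

/-- Build an element of the crossed product from a finitely supported function. -/
def ofF (x : G →₀ M) : CrossedProduct α := x

instance : AddCommGroup (CrossedProduct α) := inferInstanceAs (AddCommGroup (G →₀ M))
instance : Module ℂ (CrossedProduct α) := inferInstanceAs (Module ℂ (G →₀ M))

@[simp] lemma toF_add (x y : CrossedProduct α) : toF α (x + y) = toF α x + toF α y := rfl
@[simp] lemma toF_zero : toF α (0 : CrossedProduct α) = 0 := rfl
@[simp] lemma toF_smul (c : ℂ) (x : CrossedProduct α) : toF α (c • x) = c • toF α x := rfl
@[simp] lemma ofF_add (f g : G →₀ M) : ofF α (f + g) = ofF α f + ofF α g := rfl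
lemma toF_injective : Function.Injective (toF α) := fun _ _ h => h
@[simp] lemma toF_ofF (f : G →₀ M) : toF α (ofF α f) = f := rfl
@[simp] lemma ofF_zero : ofF α (0 : G →₀ M) = 0 := rfl

instance : Mul (CrossedProduct α) :=
  ⟨fun x y => ofF α ((toF α x).sum fun g m => (toF α y).sum fun h n =>
      Finsupp.single (g * h) (m * α g n))⟩

lemma toF_mul (x y : CrossedProduct α) :
    toF α (x * y) = (toF α x).sum fun g m => (toF α y).sum fun h n =>
      Finsupp.single (g * h) (m * α g n) := rfl

instance : One (CrossedProduct α) := ⟨ofF α (Finsupp.single 1 1)⟩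

lemma toF_one : toF α (1 : CrossedProduct α) = Finsupp.single 1 1 := rfl

lemma ofF_single_mul (g h : G) (m n : M) :
    ofF α (Finsupp.single g m) * ofF α (Finsupp.single h n)
      = ofF α (Finsupp.single (g * h) (m * α g n)) := by
  apply toF_injective
  rw [toF_mul, toF_ofF, toF_ofF, toF_ofF]
  rw [Finsupp.sum_single_index (by simp), Finsupp.sum_single_index (by simp)]

private lemma mul_add' (x y z : CrossedProduct α) : x * (y + z) = x * y + x * z := by
  apply toF_injective
  rw [toF_add, toF_mul, toF_mul, toF_mul, ← Finsupp.sum_add]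
  refine Finsupp.sum_congr fun g _ => ?_
  rw [toF_add, Finsupp.sum_add_index' (fun h => by simp) (fun h n₁ n₂ => by
    simp [mul_add, Finsupp.single_add])]

private lemma add_mul' (x y z : CrossedProduct α) : (x + y) * z = x * z + y * z := by
  apply toF_injective
  rw [toF_add, toF_mul, toF_mul, toF_mul, toF_add]
  rw [Finsupp.sum_add_index' (fun g => by simp) (fun g m₁ m₂ => by
    rw [← Finsupp.sum_add]
    exact Finsupp.sum_congr fun h _ => by simp [add_mul, Finsupp.single_add])]

private lemma zero_mul' (x : CrossedProduct α) : 0 * x = 0 := by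
  apply toF_injective
  rw [toF_mul, toF_zero, Finsupp.sum_zero_index]

private lemma mul_zero' (x : CrossedProduct α) : x * 0 = 0 := by
  apply toF_injective
  rw [toF_mul, toF_zero]
  simp [Finsupp.sum_zero_index]

private lemma one_mul' (x : CrossedProduct α) : 1 * x = x := by
  apply toF_injective
  rw [toF_mul, toF_one, Finsupp.sum_single_index (by simp)]
  calc (toF α x).sum (fun h n => Finsupp.single ((1:G) * h) ((1:M) * (α 1) n))
      = (toF α x).sum (fun h n => Finsupp.single h n) :=
        Finsupp.sum_congr fun h _ => by simp
    _ = toF α x := Finsupp.sum_single _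

private lemma mul_one' (x : CrossedProduct α) : x * 1 = x := by
  apply toF_injective
  rw [toF_mul, toF_one]
  have : ∀ g : G, ∀ m : M,
      (Finsupp.single (1 : G) (1 : M)).sum (fun h n => Finsupp.single (g * h) (m * α g n))
        = Finsupp.single g m := by
    intro g m
    rw [Finsupp.sum_single_index (by simp)]
    simp
  calc (toF α x).sum (fun g m => (Finsupp.single (1:G) (1:M)).sum fun h n =>
          Finsupp.single (g * h) (m * α g n))
      = (toF α x).sum (fun g m => Finsupp.single g m) :=
        Finsupp.sum_congr fun g _ => this g _
    _ = toF α x := Finsupp.sum_single _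

private lemma mul_assoc' (x y z : CrossedProduct α) : x * y * z = x * (y * z) := by
  have hx : x = ofF α (toF α x) := rfl
  have hy : y = ofF α (toF α y) := rfl
  have hz : z = ofF α (toF α z) := rfl
  rw [hx, hy, hz]
  generalize (toF α x) = f
  generalize (toF α y) = g
  generalize (toF α z) = h
  induction f using Finsupp.induction_linear with
  | zero => rw [ofF_zero α, zero_mul' α, zero_mul' α, zero_mul' α]
  | add f₁ f₂ ih₁ ih₂ => rw [ofF_add, add_mul' α, add_mul' α, add_mul' α, ih₁, ih₂]
  | single a b =>
    induction g using Finsupp.induction_linear with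
    | zero => rw [ofF_zero α, mul_zero' α, zero_mul' α, mul_zero' α]
    | add g₁ g₂ ih₁ ih₂ => rw [ofF_add, mul_add' α, add_mul' α, add_mul' α, mul_add' α, ih₁, ih₂]
    | single c d =>
      induction h using Finsupp.induction_linear with
      | zero => rw [ofF_zero α, mul_zero' α, mul_zero' α, mul_zero' α]
      | add h₁ h₂ ih₁ ih₂ => rw [ofF_add, mul_add' α, mul_add' α, mul_add' α, ih₁, ih₂]
      | single e s =>
        rw [ofF_single_mul, ofF_single_mul, ofF_single_mul, ofF_single_mul]
        simp [mul_assoc, map_mul, AlgEquiv.mul_apply]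

instance : Ring (CrossedProduct α) where
  __ := (inferInstance : AddCommGroup (CrossedProduct α))
  left_distrib := mul_add' α
  right_distrib := fun a b c => add_mul' α a b c
  zero_mul := zero_mul' α
  mul_zero := mul_zero' α
  mul_assoc := mul_assoc' α
  one_mul := one_mul' α
  mul_one := mul_one' α

instance : Algebra ℂ (CrossedProduct α) :=
  Algebra.ofModule
    (fun c x y => by
      apply toF_injective
      simp only [toF_mul, toF_smul]
      rw [Finsupp.sum_smul_index' (fun g => by simp), Finsupp.smul_sum]
      refine Finsupp.sum_congr fun g _ => ?_
      rw [Finsupp.smul_sum]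
      exact Finsupp.sum_congr fun h _ => by
        rw [smul_mul_assoc, Finsupp.smul_single])
    (fun c x y => by
      apply toF_injective
      simp only [toF_mul, toF_smul]
      rw [Finsupp.smul_sum]
      refine Finsupp.sum_congr fun g _ => ?_
      rw [Finsupp.smul_sum, Finsupp.sum_smul_index' (fun h => by simp)]
      exact Finsupp.sum_congr fun h _ => by
        rw [map_smul, mul_smul_comm, Finsupp.smul_single])

/-- The element `m u_g` of the crossed product. -/
def single (g : G) (m : M) : CrossedProduct α := ofF α (Finsupp.single g m)

/-- The coefficient of `x ∈ M ⋊_α G` at a group element `g`. -/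
def coeff (x : CrossedProduct α) (g : G) : M := toF α x g

/-- The canonical conditional expectation `E_M : M ⋊_α G → M`, reading off
the coefficient at the group identity. -/
def E : CrossedProduct α →ₗ[ℂ] M where
  toFun x := coeff α x 1
  map_add' x y := by simp [coeff]
  map_smul' c x := by simp [coeff]

@[simp] lemma E_apply (x : CrossedProduct α) : E α x = coeff α x 1 := rfl

end CrossedProduct

/-- `suppIn α S x` : the element `x` of the crossed product is supported on the subset `S ⊆ G`. -/
def CrossedProduct.suppIn {M : Type*} [Ring M] [Algebra ℂ M] {G : Type*} [Group G]
    (α : G →* (M ≃ₐ[ℂ] M)) (S : Set G) (x : CrossedProduct α) : Prop :=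
  ∀ g : G, g ∉ S → CrossedProduct.coeff α x g = 0

open Finsupp Monoid

section FreeKey

universe u₁ u₂
variable (G₁ : Type u₁) (G₂ : Type u₂) [Group G₁] [Group G₂]

/-- Bool-indexed family for the binary free product. -/
def FFam : Bool → Type (max u₁ u₂) := fun b => cond b (ULift.{u₂} G₁) (ULift.{u₁} G₂)

instance : ∀ b, Group (FFam G₁ G₂ b) := fun b => match b with
  | true => inferInstanceAs (Group (ULift G₁))
  | false => inferInstanceAs (Group (ULift G₂))

/-- The canonical inclusions. -/
def ubHom : ∀ b, FFam G₁ G₂ b →* Coprod G₁ G₂ := fun b => match b with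
  | true => Coprod.inl.comp (MulEquiv.ulift.toMonoidHom)
  | false => Coprod.inr.comp (MulEquiv.ulift.toMonoidHom)

lemma range_ubHom_true : Set.range (ubHom G₁ G₂ true) =
    Set.range (Coprod.inl : G₁ →* Coprod G₁ G₂) := by
  ext g
  constructor
  · rintro ⟨a, rfl⟩; exact ⟨MulEquiv.ulift a, rfl⟩
  · rintro ⟨a, rfl⟩; exact ⟨ULift.up a, rfl⟩

lemma range_ubHom_false : Set.range (ubHom G₁ G₂ false) =
    Set.range (Coprod.inr : G₂ →* Coprod G₁ G₂) := by
  ext g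
  constructor
  · rintro ⟨a, rfl⟩; exact ⟨MulEquiv.ulift a, rfl⟩
  · rintro ⟨a, rfl⟩; exact ⟨ULift.up a, rfl⟩

/-- Comparison map to the indexed free product. -/
def psiHom : Coprod G₁ G₂ →* CoprodI (FFam G₁ G₂) :=
  Coprod.lift
    ((CoprodI.of (M := FFam G₁ G₂) (i := true)).comp (MulEquiv.ulift.symm.toMonoidHom))
    ((CoprodI.of (M := FFam G₁ G₂) (i := false)).comp (MulEquiv.ulift.symm.toMonoidHom))

lemma psiHom_ub (b : Bool) (a : FFam G₁ G₂ b) :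
    psiHom G₁ G₂ (ubHom G₁ G₂ b a) = CoprodI.of a := by
  cases b <;>
    · simp only [psiHom, ubHom, MonoidHom.comp_apply, MulEquiv.coe_toMonoidHom,
        Coprod.lift_apply_inl, Coprod.lift_apply_inr]
      exact congrArg _ rfl

lemma psiHom_injective : Function.Injective (psiHom G₁ G₂) := by
  have h : (CoprodI.lift (ubHom G₁ G₂)).comp (psiHom G₁ G₂) = MonoidHom.id _ := by
    apply Coprod.hom_ext <;> ext x <;>
      · simp only [psiHom, ubHom, MonoidHom.comp_apply, MonoidHom.id_comp,
          Coprod.lift_apply_inl, Coprod.lift_apply_inr, CoprodI.lift_of,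
          MulEquiv.coe_toMonoidHom]
        rfl
  intro a b hab
  have := congrArg (CoprodI.lift (ubHom G₁ G₂)) hab
  simpa [← MonoidHom.comp_apply, h] using this

lemma word_prod_injective :
    Function.Injective (CoprodI.Word.prod (M := FFam G₁ G₂)) := by
  classical
  intro w₁ w₂ h
  have e : ∀ w : CoprodI.Word (FFam G₁ G₂), CoprodI.Word.equiv w.prod = w := fun w =>
    CoprodI.Word.equiv.apply_symm_apply w
  rw [← e w₁, ← e w₂, h]

/-- The set of elements whose reduced word starts with a letter of type `b`. -/
def TSet (b : Bool) : Set (Coprod G₁ G₂) :=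
  {g | ∃ w : CoprodI.Word (FFam G₁ G₂), psiHom G₁ G₂ g = w.prod ∧ w.fstIdx = some b}

lemma one_not_mem_TSet (b : Bool) : (1 : Coprod G₁ G₂) ∉ TSet G₁ G₂ b := by
  rintro ⟨w, hw, hidx⟩
  have hw' : w = CoprodI.Word.empty := by
    apply word_prod_injective G₁ G₂
    rw [CoprodI.Word.prod_empty, ← hw, map_one]
  rw [hw'] at hidx
  simp [CoprodI.Word.fstIdx, CoprodI.Word.empty] at hidx

lemma mem_TSet_of_ub {b : Bool} {g : Coprod G₁ G₂}
    (hg : g ∈ Set.range (ubHom G₁ G₂ b)) (hg1 : g ≠ 1) : g ∈ TSet G₁ G₂ b := by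
  obtain ⟨a, rfl⟩ := hg
  have ha : a ≠ 1 := by rintro rfl; exact hg1 (map_one _)
  refine ⟨CoprodI.Word.cons a CoprodI.Word.empty
    (by rw [show (CoprodI.Word.empty : CoprodI.Word (FFam G₁ G₂)).fstIdx = none from rfl]; exact (Option.some_ne_none b).symm) ha, ?_, ?_⟩
  · rw [CoprodI.Word.prod_cons, CoprodI.Word.prod_empty, mul_one, psiHom_ub]
  · rw [CoprodI.Word.fstIdx_cons]

lemma mul_mem_TSet {b c : Bool} (hbc : b ≠ c) {g₁ g₂ : Coprod G₁ G₂}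
    (hg : g₁ ∈ Set.range (ubHom G₁ G₂ b)) (hg1 : g₁ ≠ 1)
    (hg2 : g₂ ∈ TSet G₁ G₂ c) : g₁ * g₂ ∈ TSet G₁ G₂ b := by
  obtain ⟨a, rfl⟩ := hg
  obtain ⟨w, hw, hidx⟩ := hg2
  have ha : a ≠ 1 := by rintro rfl; exact hg1 (map_one _)
  have hne : w.fstIdx ≠ some b := by
    rw [hidx]; intro h; exact hbc (Option.some.inj h).symm
  refine ⟨CoprodI.Word.cons a w hne ha, ?_, ?_⟩
  · rw [CoprodI.Word.prod_cons, map_mul, psiHom_ub, hw]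
  · rw [CoprodI.Word.fstIdx_cons]

end FreeKey

namespace CrossedProduct

section Aux

variable {M : Type*} [Ring M] [Algebra ℂ M] {G : Type*} [Group G]
variable (α : G →* (M ≃ₐ[ℂ] M))

lemma suppIn_mono {S T : Set G} (h : S ⊆ T) {x : CrossedProduct α}
    (hx : suppIn α S x) : suppIn α T x :=
  fun g hg => hx g (fun hS => hg (h hS))

lemma suppIn_mul {S₁ S₂ T : Set G} (h : ∀ g₁ ∈ S₁, ∀ g₂ ∈ S₂, g₁ * g₂ ∈ T)
    {x y : CrossedProduct α} (hx : suppIn α S₁ x) (hy : suppIn α S₂ y) :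
    suppIn α T (x * y) := by
  classical
  intro g hg
  show toF α (x * y) g = 0
  rw [toF_mul, Finsupp.sum_apply, Finsupp.sum]
  apply Finset.sum_eq_zero
  intro g₁ hg₁
  rw [Finsupp.sum_apply, Finsupp.sum]
  apply Finset.sum_eq_zero
  intro g₂ hg₂
  have h₁ : g₁ ∈ S₁ := by
    by_contra hc
    exact Finsupp.mem_support_iff.mp hg₁ (hx g₁ hc)
  have h₂ : g₂ ∈ S₂ := by
    by_contra hc
    exact Finsupp.mem_support_iff.mp hg₂ (hy g₂ hc)
  rw [Finsupp.single_apply, if_neg]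
  intro hgg
  exact hg (hgg ▸ h g₁ h₁ g₂ h₂)

lemma suppIn_of_E_eq_zero {S : Set G} {x : CrossedProduct α}
    (hx : suppIn α S x) (hE : E α x = 0) : suppIn α (S \ {1}) x := by
  intro g hg
  by_cases h1 : g = 1
  · subst h1; exact hE
  · refine hx g fun hS => hg ⟨hS, by simpa using h1⟩

end Aux

section Key

universe u₁ u₂
variable {M : Type*} [Ring M] [Algebra ℂ M]
variable {G₁ : Type u₁} {G₂ : Type u₂} [Group G₁] [Group G₂]
variable (α : Monoid.Coprod G₁ G₂ →* (M ≃ₐ[ℂ] M))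

lemma key_suppIn : ∀ (l : List (Bool × CrossedProduct α)) (hne : l ≠ []),
    (l.map Prod.fst).Chain' (· ≠ ·) →
    (∀ q ∈ l, suppIn α (Set.range (ubHom G₁ G₂ q.1)) q.2) →
    (∀ q ∈ l, E α q.2 = 0) →
    suppIn α (TSet G₁ G₂ (l.head hne).1) (l.map Prod.snd).prod := by
  intro l
  induction l with
  | nil => intro hne; exact absurd rfl hne
  | cons p t ih =>
    intro _ hchain hsupp hE
    cases t with
    | nil =>
      rw [List.map_cons, List.map_nil, List.prod_cons, List.prod_nil, mul_one]
      have hp := suppIn_of_E_eq_zero α (hsupp p (List.mem_cons_self))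
        (hE p (List.mem_cons_self))
      refine suppIn_mono α ?_ hp
      rintro g ⟨hgr, hg1⟩
      exact mem_TSet_of_ub G₁ G₂ hgr (by simpa using hg1)
    | cons q t' =>
      rw [List.map_cons, List.prod_cons]
      rw [List.map_cons, List.map_cons] at hchain
      have hpq : p.1 ≠ q.1 := (List.isChain_cons_cons.mp hchain).1
      have htail := ih (List.cons_ne_nil q t')
        (by rw [List.map_cons]; exact (List.isChain_cons_cons.mp hchain).2)
        (fun r hr => hsupp r (List.mem_cons_of_mem p hr))
        (fun r hr => hE r (List.mem_cons_of_mem p hr))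
      have hp := suppIn_of_E_eq_zero α (hsupp p (List.mem_cons_self))
        (hE p (List.mem_cons_self))
      refine suppIn_mul α ?_ hp htail
      rintro g₁ ⟨hgr, hg1⟩ g₂ hg₂
      exact mul_mem_TSet G₁ G₂ hpq hgr (by simpa using hg1) hg₂

end Key

end CrossedProduct

lemma fin2_decide_ne {a b : Fin 2} (h : a ≠ b) :
    decide (a = 0) ≠ decide (b = 0) := by
  fin_cases a <;> fin_cases b <;> simp_all

/-- for `G = G₁ * G₂` a free product of groups, the subalgebras `A₁, A₂` of
`M ⋊_α G` of elements supported on `ι₁(G₁)`, resp. `ι₂(G₂)`, are free with amalgamation over `M`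
with respect to `E_M`: every alternating product of `E_M`-centered elements is `E_M`-centered. -/
theorem crossedProduct_coprod_amalgamatedFree {M : Type*} [Ring M] [Algebra ℂ M]
    {G₁ G₂ : Type*} [Group G₁] [Group G₂]
    (α : Monoid.Coprod G₁ G₂ →* (M ≃ₐ[ℂ] M))
    (n : ℕ) (hn : 1 ≤ n) (i : Fin n → Fin 2)
    (halt : ∀ j : Fin n, (h : (j : ℕ) + 1 < n) → i j ≠ i ⟨(j : ℕ) + 1, h⟩)
    (x : Fin n → CrossedProduct α)
    (hsupp : ∀ j, CrossedProduct.suppIn α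
      (if i j = 0
        then Set.range ⇑(Monoid.Coprod.inl : G₁ →* Monoid.Coprod G₁ G₂)
        else Set.range ⇑(Monoid.Coprod.inr : G₂ →* Monoid.Coprod G₁ G₂)) (x j))
    (hE : ∀ j, CrossedProduct.E α (x j) = 0) :
    CrossedProduct.E α (List.ofFn x).prod = 0 := by
  classical
  set l : List (Bool × CrossedProduct α) :=
    List.ofFn (fun j => (decide (i j = 0), x j)) with hl
  have hne : l ≠ [] := by
    simp only [hl, ne_eq, List.ofFn_eq_nil_iff]
    omega
  have hchain : (l.map Prod.fst).Chain' (· ≠ ·) := by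
    rw [hl, List.map_ofFn]; refine List.isChain_ofFn.mpr ?_
    intro k hk
    simp only [Function.comp]
    exact fin2_decide_ne (halt ⟨k, Nat.lt_of_succ_lt hk⟩ hk)
  have hsupp' : ∀ q ∈ l, CrossedProduct.suppIn α (Set.range ⇑(ubHom G₁ G₂ q.1)) q.2 := by
    intro q hq
    rw [hl] at hq
    obtain ⟨j, hj⟩ := List.mem_ofFn.mp hq
    subst hj
    simp only
    by_cases h0 : i j = 0
    · rw [show (decide (i j = 0)) = true from decide_eq_true h0, range_ubHom_true]
      have := hsupp j
      rwa [if_pos h0] at this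
    · rw [show (decide (i j = 0)) = false from decide_eq_false h0, range_ubHom_false]
      have := hsupp j
      rwa [if_neg h0] at this
  have hE' : ∀ q ∈ l, CrossedProduct.E α q.2 = 0 := by
    intro q hq
    rw [hl] at hq
    obtain ⟨j, hj⟩ := List.mem_ofFn.mp hq
    subst hj
    simp only
    exact hE j
  have hk := CrossedProduct.key_suppIn α l hne hchain hsupp' hE'
  have hmap : l.map Prod.snd = List.ofFn x := by rw [hl, List.map_ofFn]; rfl
  rw [← hmap, CrossedProduct.E_apply]
  exact hk 1 (one_not_mem_TSet G₁ G₂ _)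
end
end

section
/- Let N = k₁ + k₂ with k₁, k₂ ≥ 1, let F_N be the free group on N generators x₁, …, x_N, let M be a unital complex algebra, α an action of F_N on M by algebra automorphisms, and E_M the canonical conditional expectation on M ⋊_α F_N. Let H₁ = ⟨x₁, …, x_{k₁}⟩ and H₂ = ⟨x_{k₁+1}, …, x_N⟩ be the subgroups generated by the first k₁ and the remaining k₂ generators, and for i = 1, 2 let A_i be the subalgebra of elements supported on H_i. Then A₁ and A₂ are free with amalgamation over M with respect to E_M: for every n ≥ 1, every sequence of indices i₁, …, iₙ ∈ {1,2} with i_j ≠ i_{j+1} for 1 ≤ j < n, and every x_j ∈ A_{i_j} with E_M(x_j) = 0 for all j, one has E_M(x₁x₂⋯xₙ) = 0. (This is the freeness underlying L_M(F_N) = L_M(F_{k₁}) *_M L_M(F_{k₂}).) -/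
open Finsupp

noncomputable section

variable {M : Type*} [Ring M] [Algebra ℂ M] {G : Type*} [Group G]

open Monoid in
lemma neword_prod_ne_one {ι : Type*} {H : ι → Type*} [∀ i, Group (H i)] {i j : ι}
    (w : CoprodI.NeWord H i j) : w.prod ≠ 1 := by
  classical
  intro h
  have h2 : (CoprodI.Word.equiv (M := H)).symm w.toWord
      = (CoprodI.Word.equiv (M := H)).symm CoprodI.Word.empty := by
    show w.toWord.prod = CoprodI.Word.empty.prod
    rw [CoprodI.Word.prod_empty]; exact h
  have h3 : w.toWord = CoprodI.Word.empty := (CoprodI.Word.equiv (M := H)).symm.injective h2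
  have h4 : w.toList = ([] : List (Σ i, H i)) := congrArg CoprodI.Word.toList h3
  exact w.toList_ne_nil h4

open Monoid in
lemma neword_exists {ι : Type*} {H : ι → Type*} [∀ i, Group (H i)] (n : ℕ) :
    ∀ (idx : Fin (n+1) → ι) (m : ∀ j, H (idx j)),
    (∀ j : Fin n, idx j.castSucc ≠ idx j.succ) → (∀ j, m j ≠ 1) →
    ∃ w : CoprodI.NeWord H (idx 0) (idx (Fin.last n)),
      w.prod = (List.ofFn fun j => CoprodI.of (m j)).prod := by
  induction n with
  | zero =>
    intro idx m _ hm
    exact ⟨.singleton (m 0) (hm 0), by simp [List.ofFn_succ]⟩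
  | succ n ih =>
    intro idx m halt hm
    obtain ⟨w, hw⟩ := ih (idx ∘ Fin.succ) (fun j => m j.succ)
      (fun j => by have h := halt j.succ; rw [← Fin.succ_castSucc] at h; exact h)
      (fun j => hm j.succ)
    have hne : idx 0 ≠ (idx ∘ Fin.succ) 0 := by simpa using halt 0
    refine ⟨CoprodI.NeWord.append (.singleton (m 0) (hm 0)) hne w, ?_⟩
    rw [CoprodI.NeWord.append_prod, CoprodI.NeWord.prod_singleton, hw]
    conv_rhs => rw [List.ofFn_succ, List.prod_cons]

/-- The two factor types for the free-product decomposition of `FreeGroup (Fin (k₁+k₂))`. -/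
abbrev FamAux (k₁ k₂ : ℕ) : Fin 2 → Type :=
  fun b => FreeGroup {t : Fin (k₁ + k₂) // if b = 0 then (t : ℕ) < k₁ else k₁ ≤ (t : ℕ)}

open Monoid in
lemma alt_prod_ne_one (k₁ k₂ : ℕ) {n : ℕ} (i : Fin (n+1) → Fin 2)
    (halt : ∀ j : Fin (n+1), (h : (j : ℕ) + 1 < n+1) → i j ≠ i ⟨(j : ℕ) + 1, h⟩)
    (g : Fin (n+1) → FreeGroup (Fin (k₁+k₂)))
    (hg : ∀ j, g j ∈ (if i j = 0
        then Subgroup.closure (FreeGroup.of '' {t : Fin (k₁ + k₂) | (t : ℕ) < k₁})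
        else Subgroup.closure (FreeGroup.of '' {t : Fin (k₁ + k₂) | k₁ ≤ (t : ℕ)}) :
          Subgroup (FreeGroup (Fin (k₁ + k₂)))))
    (hne : ∀ j, g j ≠ 1) :
    (List.ofFn g).prod ≠ 1 := by
  classical
  let Fam := FamAux k₁ k₂
  let φ : FreeGroup (Fin (k₁+k₂)) →* CoprodI Fam :=
    FreeGroup.lift fun t =>
      if h : (t : ℕ) < k₁
      then CoprodI.of (i := (0 : Fin 2)) (FreeGroup.of (⟨t, by simp [h]⟩ :
        {t : Fin (k₁+k₂) // if (0 : Fin 2) = 0 then (t : ℕ) < k₁ else k₁ ≤ (t : ℕ)}))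
      else CoprodI.of (i := (1 : Fin 2)) (FreeGroup.of (⟨t, by simp [le_of_not_gt h]⟩ :
        {t : Fin (k₁+k₂) // if (1 : Fin 2) = 0 then (t : ℕ) < k₁ else k₁ ≤ (t : ℕ)}))
  let ψ : CoprodI Fam →* FreeGroup (Fin (k₁+k₂)) :=
    CoprodI.lift fun b => FreeGroup.lift fun s => FreeGroup.of s.1
  have hψφ : ∀ y, ψ (φ y) = y := by
    intro y
    have : ψ.comp φ = MonoidHom.id _ := by
      apply FreeGroup.ext_hom
      intro t
      simp only [MonoidHom.comp_apply, MonoidHom.id_apply, φ, FreeGroup.lift_apply_of]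
      split_ifs <;> · rw [Monoid.CoprodI.lift_of]; exact FreeGroup.lift_apply_of
    calc ψ (φ y) = (ψ.comp φ) y := rfl
      _ = y := by rw [this]; rfl
  have hinj : Function.Injective φ := fun a b h => by
    rw [← hψφ a, ← hψφ b, h]
  have hrange : ∀ j, φ (g j) ∈ (CoprodI.of (M := Fam) (i := i j)).range := by
    intro j
    have h2 : (i j : ℕ) < 2 := (i j).2
    have hcases : i j = 0 ∨ i j = 1 := by
      have : (i j : ℕ) = 0 ∨ (i j : ℕ) = 1 := by omega
      rcases this with h | h
      · exact Or.inl (Fin.ext h)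
      · exact Or.inr (Fin.ext h)
    rcases hcases with hc | hc
    · have hmem := hg j
      rw [if_pos hc] at hmem
      rw [hc]
      refine Subgroup.closure_induction ?_ ?_ ?_ ?_ hmem
      · rintro y ⟨t, ht, rfl⟩
        refine ⟨FreeGroup.of ⟨t, by simpa using ht⟩, ?_⟩
        simp only [φ, FreeGroup.lift_apply_of]
        rw [dif_pos (show (t : ℕ) < k₁ from ht)]
      · exact ⟨1, by simp⟩
      · rintro a b _ _ ⟨u, hu⟩ ⟨v, hv⟩
        exact ⟨u * v, by rw [map_mul, map_mul, hu, hv]⟩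
      · rintro a _ ⟨u, hu⟩
        exact ⟨u⁻¹, by rw [map_inv, map_inv, hu]⟩
    · have hc0 : ¬ i j = 0 := by rw [hc]; decide
      have hmem := hg j
      rw [if_neg hc0] at hmem
      rw [hc]
      refine Subgroup.closure_induction ?_ ?_ ?_ ?_ hmem
      · rintro y ⟨t, ht, rfl⟩
        have ht' : ¬ (t : ℕ) < k₁ := not_lt.mpr ht
        refine ⟨FreeGroup.of ⟨t, by simpa using ht⟩, ?_⟩
        simp only [φ, FreeGroup.lift_apply_of]
        rw [dif_neg ht']

      · exact ⟨1, by simp⟩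
      · rintro a b _ _ ⟨u, hu⟩ ⟨v, hv⟩
        exact ⟨u * v, by rw [map_mul, map_mul, hu, hv]⟩
      · rintro a _ ⟨u, hu⟩
        exact ⟨u⁻¹, by rw [map_inv, map_inv, hu]⟩
  choose m hm using hrange
  have hm1 : ∀ j, m j ≠ 1 := by
    intro j h1
    apply hne j
    apply hinj
    rw [← hm j, h1, map_one, map_one]
  have halt' : ∀ j : Fin n, i j.castSucc ≠ i j.succ := by
    intro j
    have hlt : (j.castSucc : ℕ) + 1 < n + 1 := by
      have := j.2
      simp only [Fin.coe_castSucc]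
      omega
    have h := halt j.castSucc hlt
    have hsucc : (⟨(j.castSucc : ℕ) + 1, hlt⟩ : Fin (n+1)) = j.succ := by
      ext
      simp
    rwa [hsucc] at h
  obtain ⟨w, hw⟩ := neword_exists (H := Fam) n i m halt' hm1
  intro hprod
  have : φ (List.ofFn g).prod = 1 := by rw [hprod, map_one]
  rw [map_list_prod, List.map_ofFn] at this
  have hfun : (φ ∘ g) = fun j => CoprodI.of (m j) := funext fun j => (hm j).symm
  rw [hfun, ← hw] at this
  exact neword_prod_ne_one w this

lemma coeff_mul_ne_zero {M : Type*} [Ring M] [Algebra ℂ M] {G : Type*} [Group G]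
    (α : G →* (M ≃ₐ[ℂ] M)) (x y : CrossedProduct α) (g : G)
    (h : CrossedProduct.coeff α (x * y) g ≠ 0) :
    ∃ a b : G, CrossedProduct.coeff α x a ≠ 0 ∧ CrossedProduct.coeff α y b ≠ 0 ∧ a * b = g := by
  classical
  by_contra hcon
  push_neg at hcon
  apply h
  show CrossedProduct.toF α (x * y) g = 0
  rw [CrossedProduct.toF_mul, Finsupp.sum_apply]
  rw [Finsupp.sum]
  refine Finset.sum_eq_zero fun a ha => ?_
  rw [Finsupp.sum_apply, Finsupp.sum]
  refine Finset.sum_eq_zero fun b hb => ?_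
  have ha' : CrossedProduct.coeff α x a ≠ 0 := Finsupp.mem_support_iff.mp ha
  have hb' : CrossedProduct.coeff α y b ≠ 0 := Finsupp.mem_support_iff.mp hb
  have hne : a * b ≠ g := fun hEq => (hcon a b ha' hb') hEq
  rw [Finsupp.single_apply, if_neg hne]

lemma coeff_listProd_ne_zero {M : Type*} [Ring M] [Algebra ℂ M] {G : Type*} [Group G]
    (α : G →* (M ≃ₐ[ℂ] M)) (n : ℕ) :
    ∀ (x : Fin (n+1) → CrossedProduct α) (g : G),
    CrossedProduct.coeff α (List.ofFn x).prod g ≠ 0 →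
    ∃ gs : Fin (n+1) → G, (∀ j, CrossedProduct.coeff α (x j) (gs j) ≠ 0)
      ∧ (List.ofFn gs).prod = g := by
  induction n with
  | zero =>
    intro x g h
    refine ⟨fun _ => g, fun j => ?_, by simp⟩
    have hj : j = 0 := Fin.ext (by omega)
    subst hj
    simpa using h
  | succ n ih =>
    intro x g h
    rw [List.ofFn_succ, List.prod_cons] at h
    obtain ⟨a, b, ha, hb, hab⟩ := coeff_mul_ne_zero α _ _ _ h
    obtain ⟨gs', hgs', hprod'⟩ := ih (fun j => x j.succ) b hb
    refine ⟨Fin.cons a gs', fun j => ?_, ?_⟩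
    · refine Fin.cases ?_ ?_ j
      · simpa using ha
      · intro j'
        simpa using hgs' j'
    · rw [List.ofFn_succ, List.prod_cons]
      simp only [Fin.cons_zero, Fin.cons_succ]
      rw [hprod', hab]

/-- for `N = k₁ + k₂`, the subalgebras of `M ⋊_α F_N` of elements supported on the
subgroup generated by the first `k₁` generators, resp. by the remaining `k₂` generators, are free
with amalgamation over `M` with respect to `E_M`: every alternating product of `E_M`-centered
elements is `E_M`-centered. -/
theorem crossedProduct_freeGroup_split_amalgamatedFree {M : Type*} [Ring M] [Algebra ℂ M]
    (k₁ k₂ : ℕ) (hk₁ : 1 ≤ k₁) (hk₂ : 1 ≤ k₂)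
    (α : FreeGroup (Fin (k₁ + k₂)) →* (M ≃ₐ[ℂ] M))
    (n : ℕ) (hn : 1 ≤ n) (i : Fin n → Fin 2)
    (halt : ∀ j : Fin n, (h : (j : ℕ) + 1 < n) → i j ≠ i ⟨(j : ℕ) + 1, h⟩)
    (x : Fin n → CrossedProduct α)
    (hsupp : ∀ j, CrossedProduct.suppIn α
      ((if i j = 0
        then Subgroup.closure (FreeGroup.of '' {t : Fin (k₁ + k₂) | (t : ℕ) < k₁})
        else Subgroup.closure (FreeGroup.of '' {t : Fin (k₁ + k₂) | k₁ ≤ (t : ℕ)}) :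
          Subgroup (FreeGroup (Fin (k₁ + k₂)))) : Set _) (x j))
    (hE : ∀ j, CrossedProduct.E α (x j) = 0) :
    CrossedProduct.E α (List.ofFn x).prod = 0 := by
  obtain ⟨n', rfl⟩ : ∃ m, n = m + 1 := ⟨n - 1, by omega⟩
  by_contra hcon
  obtain ⟨gs, hgs, hprod⟩ := coeff_listProd_ne_zero α n' x 1 hcon
  have hmem : ∀ j, gs j ∈ (if i j = 0
      then Subgroup.closure (FreeGroup.of '' {t : Fin (k₁ + k₂) | (t : ℕ) < k₁})
      else Subgroup.closure (FreeGroup.of '' {t : Fin (k₁ + k₂) | k₁ ≤ (t : ℕ)}) :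
        Subgroup (FreeGroup (Fin (k₁ + k₂)))) := by
    intro j
    by_contra hnot
    exact hgs j (hsupp j (gs j) hnot)
  have hne1 : ∀ j, gs j ≠ 1 := by
    intro j h1
    apply hgs j
    rw [h1]
    have := hE j
    rw [CrossedProduct.E_apply] at this
    exact this
  exact alt_prod_ne_one k₁ k₂ i halt gs hmem hne1 hprod
end
end
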